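/- Isolated zeros on a subpoint: let U ⊆ ℂ~ be sharply open, z₀ ∈ U, and f : U → ℂ~ a GHF such that the Taylor coefficient net (f_ε^(n)(z_{0ε})/n!)_{n,ε} (for a representative [z_{0ε}] = z₀ as in the definition of GHF) is weakly ρ-moderate with class T ∈ ℂ~_c, and such that for some s ∈ ℝ~ with s > 0 one has B_s(z₀) ⊆ U ∩ σ(T, z₀) and f(z) = Σ_{n∈ℕ~} (f^(n)(z₀)/n!)(z − z₀)^n for all z ∈ B_s(z₀). If f(z₀) = 0 and there exists n ∈ ℕ with n ≥ 1 and f^(n)(z₀) ≠ 0 in ℂ~, then there exist L ⊆ (0,1] with 0 an accumulation point of L and r ∈ ℝ~ with 0 < r ≤ s such that for all z ∈ B_r(z₀): if |z − z₀| > 0 then f(z) is invertible on L. -/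

import Mathlib

open Filter

noncomputable section

/-- `P ε` holds for all ε small. -/
def EvS (P : ℝ → Prop) : Prop := ∃ ε₀ : ℝ, 0 < ε₀ ∧ ε₀ ≤ 1 ∧ ∀ ε : ℝ, 0 < ε → ε ≤ ε₀ → P ε

theorem EvS.mono {P Q : ℝ → Prop} (h : EvS P) (h2 : ∀ ε, 0 < ε → ε ≤ 1 → P ε → Q ε) : EvS Q := by
  obtain ⟨e, he, he1, hP⟩ := h
  exact ⟨e, he, he1, fun ε hε hεe => h2 ε hε (hεe.trans he1) (hP ε hε hεe)⟩

theorem EvS.and {P Q : ℝ → Prop} (h : EvS P) (h' : EvS Q) : EvS fun ε => P ε ∧ Q ε := by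
  obtain ⟨e, he, he1, hP⟩ := h
  obtain ⟨e', he', he1', hQ⟩ := h'
  exact ⟨min e e', lt_min he he', le_trans (min_le_left _ _) he1, fun ε hε hm =>
    ⟨hP ε hε (le_trans hm (min_le_left _ _)), hQ ε hε (le_trans hm (min_le_right _ _))⟩⟩

/-- A gauge: a nonincreasing net of reals in (0,1] tending to 0. -/
structure Gauge where
  ρ : ℝ → ℝ
  pos : ∀ ε : ℝ, 0 < ε → ε ≤ 1 → 0 < ρ ε
  le_one : ∀ ε : ℝ, 0 < ε → ε ≤ 1 → ρ ε ≤ 1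
  anti : ∀ ε ε' : ℝ, 0 < ε → ε ≤ ε' → ε' ≤ 1 → ρ ε' ≤ ρ ε
  to_zero : Tendsto ρ (nhdsWithin 0 (Set.Ioi 0)) (nhds 0)

namespace Gauge

theorem evs_le (g : Gauge) {δ : ℝ} (hδ : 0 < δ) : EvS fun ε => g.ρ ε ≤ δ := by
  have h := g.to_zero.eventually_lt_const hδ
  rw [eventually_nhdsWithin_iff, Metric.eventually_nhds_iff] at h
  obtain ⟨e, he, hP⟩ := h
  refine ⟨min (e / 2) 1, by positivity, min_le_right _ _, fun ε hε hεe => ?_⟩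
  have hd : dist ε 0 < e := by
    rw [Real.dist_eq, sub_zero, abs_of_pos hε]
    have h1 : ε ≤ e / 2 := le_trans hεe (min_le_left _ _)
    linarith
  exact (hP hd (Set.mem_Ioi.mpr hε)).le

variable {𝕜 : Type} [RCLike 𝕜]

/-- ρ-moderate nets. -/
def Mod (g : Gauge) (x : ℝ → 𝕜) : Prop := ∃ N : ℕ, EvS fun ε => ‖x ε‖ ≤ g.ρ ε ^ (-(N : ℤ))

/-- ρ-negligible nets. -/
def Negl (g : Gauge) (x : ℝ → 𝕜) : Prop := ∀ q : ℕ, EvS fun ε => ‖x ε‖ ≤ g.ρ ε ^ q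

theorem Negl.mod {g : Gauge} {x : ℝ → 𝕜} (h : g.Negl x) : g.Mod x := by
  refine ⟨0, (h 0).mono fun ε hε hε1 hx => ?_⟩
  simpa using hx

theorem negl_sub_self (g : Gauge) (x : ℝ → 𝕜) : g.Negl fun ε => x ε - x ε := fun q =>
  ⟨1, one_pos, le_refl 1, fun ε hε hε1 => by
    simp only [sub_self, norm_zero]
    exact pow_nonneg (g.pos ε hε hε1).le q⟩

theorem negl_of_evs_eq (g : Gauge) {x y : ℝ → 𝕜} (h : EvS fun ε => x ε = y ε) :
    g.Negl fun ε => x ε - y ε := fun q => h.mono fun ε hε hε1 he => by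
  show ‖x ε - y ε‖ ≤ _
  rw [he, sub_self, norm_zero]; exact pow_nonneg (g.pos ε hε hε1).le q

theorem Negl.symm_sub {g : Gauge} {x y : ℝ → 𝕜} (h : g.Negl fun ε => x ε - y ε) :
    g.Negl fun ε => y ε - x ε := fun q => (h q).mono fun ε _ _ hx => by rwa [norm_sub_rev]

theorem Negl.add {g : Gauge} {x y : ℝ → 𝕜} (hx : g.Negl x) (hy : g.Negl y) :
    g.Negl fun ε => x ε + y ε := by
  intro q
  refine (((hx (q+1)).and (hy (q+1))).and (g.evs_le (by norm_num : (0:ℝ) < 1/2))).mono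
    fun ε hε hε1 h => ?_
  obtain ⟨⟨h1, h2⟩, h3⟩ := h
  have hρ := g.pos ε hε hε1
  calc ‖x ε + y ε‖ ≤ ‖x ε‖ + ‖y ε‖ := norm_add_le _ _
    _ ≤ g.ρ ε ^ (q+1) + g.ρ ε ^ (q+1) := add_le_add h1 h2
    _ = 2 * g.ρ ε * g.ρ ε ^ q := by ring
    _ ≤ 1 * g.ρ ε ^ q := by
        apply mul_le_mul_of_nonneg_right _ (pow_nonneg hρ.le q)
        linarith
    _ = g.ρ ε ^ q := one_mul _

theorem Negl.neg {g : Gauge} {y : ℝ → 𝕜} (hy : g.Negl y) : g.Negl fun ε => -(y ε) :=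
  fun q => (hy q).mono fun ε _ _ h => by
    show ‖-(y ε)‖ ≤ _
    rwa [norm_neg]

theorem Negl.sub {g : Gauge} {x y : ℝ → 𝕜} (hx : g.Negl x) (hy : g.Negl y) :
    g.Negl fun ε => x ε - y ε := by
  have h := hx.add hy.neg
  have heq : (fun ε => x ε + -(y ε)) = fun ε => x ε - y ε := by funext ε; ring
  rwa [heq] at h

theorem Negl.triangle {g : Gauge} {x y z : ℝ → 𝕜} (h1 : g.Negl fun ε => x ε - y ε)
    (h2 : g.Negl fun ε => y ε - z ε) : g.Negl fun ε => x ε - z ε := by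
  have h := h1.add h2
  have heq : (fun ε => (x ε - y ε) + (y ε - z ε)) = fun ε => x ε - z ε := by
    funext ε; ring
  rwa [heq] at h

end Gauge

namespace Gauge

variable {𝕜 : Type} [RCLike 𝕜]

theorem zpow_neg_le (g : Gauge) {ε : ℝ} (hε : 0 < ε) (hε1 : ε ≤ 1) {a b : ℕ} (h : a ≤ b) :
    g.ρ ε ^ (-(a:ℤ)) ≤ g.ρ ε ^ (-(b:ℤ)) := by
  apply zpow_le_zpow_right_of_le_one₀ (g.pos ε hε hε1) (g.le_one ε hε hε1)
  omega

theorem Mod.of_norm_le {g : Gauge} {x : ℝ → 𝕜} {y : ℝ → ℝ} (hy : g.Mod y)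
    (h : ∀ ε, 0 < ε → ε ≤ 1 → ‖x ε‖ ≤ |y ε|) : g.Mod x := by
  obtain ⟨N, hN⟩ := hy
  exact ⟨N, hN.mono fun ε hε hε1 hb => le_trans (h ε hε hε1) (by rwa [Real.norm_eq_abs] at hb)⟩

theorem Mod.add {g : Gauge} {x y : ℝ → 𝕜} (hx : g.Mod x) (hy : g.Mod y) :
    g.Mod fun ε => x ε + y ε := by
  obtain ⟨N, hN⟩ := hx; obtain ⟨M, hM⟩ := hy
  refine ⟨N + M + 1, ((hN.and hM).and (g.evs_le (by norm_num : (0:ℝ) < 1/2))).mono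
    fun ε hε hε1 h => ?_⟩
  obtain ⟨⟨h1, h2⟩, h3⟩ := h
  have hρ := g.pos ε hε hε1
  have e1 : g.ρ ε ^ (-(N:ℤ)) ≤ g.ρ ε ^ (-((N+M:ℕ):ℤ)) := g.zpow_neg_le hε hε1 (by omega)
  have e2 : g.ρ ε ^ (-(M:ℤ)) ≤ g.ρ ε ^ (-((N+M:ℕ):ℤ)) := g.zpow_neg_le hε hε1 (by omega)
  have key : g.ρ ε ^ (-((N+M:ℕ):ℤ)) = g.ρ ε ^ (-((N+M+1:ℕ):ℤ)) * g.ρ ε := by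
    rw [← zpow_add_one₀ hρ.ne']
    congr 1
    push_cast
    ring
  have hpos : (0:ℝ) < g.ρ ε ^ (-((N+M+1:ℕ):ℤ)) := zpow_pos hρ _
  calc ‖x ε + y ε‖ ≤ ‖x ε‖ + ‖y ε‖ := norm_add_le _ _
    _ ≤ g.ρ ε ^ (-((N+M:ℕ):ℤ)) + g.ρ ε ^ (-((N+M:ℕ):ℤ)) := add_le_add (h1.trans e1) (h2.trans e2)
    _ = 2 * g.ρ ε * g.ρ ε ^ (-((N+M+1:ℕ):ℤ)) := by rw [key]; ring
    _ ≤ 1 * g.ρ ε ^ (-((N+M+1:ℕ):ℤ)) := by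
        apply mul_le_mul_of_nonneg_right _ hpos.le
        linarith
    _ = g.ρ ε ^ (-((N+M+1:ℕ):ℤ)) := one_mul _

theorem Mod.neg {g : Gauge} {x : ℝ → 𝕜} (hx : g.Mod x) : g.Mod fun ε => -(x ε) := by
  obtain ⟨N, hN⟩ := hx
  exact ⟨N, hN.mono fun ε _ _ h => by rwa [norm_neg]⟩

theorem Mod.sub {g : Gauge} {x y : ℝ → 𝕜} (hx : g.Mod x) (hy : g.Mod y) :
    g.Mod fun ε => x ε - y ε := by
  have h := hx.add hy.neg
  have heq : (fun ε => x ε + -(y ε)) = fun ε => x ε - y ε := by funext ε; ring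
  rwa [heq] at h

theorem Mod.mul {g : Gauge} {x y : ℝ → 𝕜} (hx : g.Mod x) (hy : g.Mod y) :
    g.Mod fun ε => x ε * y ε := by
  obtain ⟨N, hN⟩ := hx; obtain ⟨M, hM⟩ := hy
  refine ⟨N + M, (hN.and hM).mono fun ε hε hε1 h => ?_⟩
  obtain ⟨h1, h2⟩ := h
  have hρ := g.pos ε hε hε1
  calc ‖x ε * y ε‖ = ‖x ε‖ * ‖y ε‖ := norm_mul _ _
    _ ≤ g.ρ ε ^ (-(N:ℤ)) * g.ρ ε ^ (-(M:ℤ)) :=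
        mul_le_mul h1 h2 (norm_nonneg _) (zpow_nonneg hρ.le _)
    _ = g.ρ ε ^ (-((N+M:ℕ):ℤ)) := by rw [← zpow_add₀ hρ.ne']; congr 1; push_cast; ring

theorem Mod.norm {g : Gauge} {x : ℝ → 𝕜} (hx : g.Mod x) : g.Mod fun ε => ‖x ε‖ := by
  obtain ⟨N, hN⟩ := hx
  exact ⟨N, hN.mono fun ε _ _ h => by rwa [norm_norm]⟩

theorem Negl.mul_mod {g : Gauge} {x y : ℝ → 𝕜} (hx : g.Negl x) (hy : g.Mod y) :
    g.Negl fun ε => x ε * y ε := by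
  obtain ⟨M, hM⟩ := hy
  intro q
  refine ((hx (q + M)).and hM).mono fun ε hε hε1 h => ?_
  obtain ⟨h1, h2⟩ := h
  have hρ := g.pos ε hε hε1
  calc ‖x ε * y ε‖ = ‖x ε‖ * ‖y ε‖ := norm_mul _ _
    _ ≤ g.ρ ε ^ (q+M) * g.ρ ε ^ (-(M:ℤ)) :=
        mul_le_mul h1 h2 (norm_nonneg _) (pow_nonneg hρ.le _)
    _ = g.ρ ε ^ q := by
        rw [← zpow_natCast (g.ρ ε) (q+M), ← zpow_add₀ hρ.ne', ← zpow_natCast (g.ρ ε) q]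
        congr 1; push_cast; ring

theorem mod_const (g : Gauge) (c : 𝕜) (hc : ‖c‖ ≤ 1) : g.Mod fun _ => c := by
  refine ⟨0, 1, one_pos, le_refl 1, fun ε hε hε1 => ?_⟩
  simpa using hc

theorem mod_pow (g : Gauge) (q : ℕ) : g.Mod fun ε => g.ρ ε ^ q := by
  refine ⟨0, 1, one_pos, le_refl 1, fun ε hε hε1 => ?_⟩
  have hρ := g.pos ε hε hε1
  show ‖g.ρ ε ^ q‖ ≤ _
  rw [Real.norm_eq_abs, abs_of_nonneg (pow_nonneg hρ.le q)]
  simpa using pow_le_one₀ hρ.le (g.le_one ε hε hε1)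

theorem mod_zpow_neg (g : Gauge) (q : ℕ) : g.Mod fun ε => g.ρ ε ^ (-(q:ℤ)) := by
  refine ⟨q, 1, one_pos, le_refl 1, fun ε hε hε1 => ?_⟩
  have hρ := g.pos ε hε hε1
  show ‖g.ρ ε ^ (-(q:ℤ))‖ ≤ _
  rw [Real.norm_eq_abs, abs_of_nonneg (zpow_nonneg hρ.le _)]

/-- Hypernatural moderateness. -/
def NMod (g : Gauge) (n : ℝ → ℕ) : Prop := g.Mod fun ε => (n ε : ℝ)

end Gauge

instance gSetoid (g : Gauge) (𝕜 : Type) [RCLike 𝕜] : Setoid {x : ℝ → 𝕜 // g.Mod x} where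
  r a b := g.Negl fun ε => a.1 ε - b.1 ε
  iseqv := ⟨fun a => g.negl_sub_self a.1, fun h => h.symm_sub, fun h h' => h.triangle h'⟩

instance natSetoid (g : Gauge) : Setoid {n : ℝ → ℕ // g.NMod n} where
  r a b := g.Negl fun ε => (a.1 ε : ℝ) - (b.1 ε : ℝ)
  iseqv := ⟨fun a => g.negl_sub_self _, fun h => h.symm_sub, fun h h' => h.triangle h'⟩

/-- The ring of Robinson-Colombeau generalized numbers (ℂ~ for 𝕜 = ℂ, ℝ~ for 𝕜 = ℝ). -/
abbrev GQ (g : Gauge) (𝕜 : Type) [RCLike 𝕜] := Quotient (gSetoid g 𝕜)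

abbrev Ct (g : Gauge) := GQ g ℂ
abbrev Rt (g : Gauge) := GQ g ℝ

/-- The set of hypernatural numbers ℕ~. -/
abbrev Nt (g : Gauge) := Quotient (natSetoid g)

def GQ.mk (g : Gauge) {𝕜 : Type} [RCLike 𝕜] (x : ℝ → 𝕜) (h : g.Mod x) : GQ g 𝕜 :=
  Quotient.mk (gSetoid g 𝕜) ⟨x, h⟩

/-- `x` is a representative of the generalized number `z`. -/
def IsRep (g : Gauge) {𝕜 : Type} [RCLike 𝕜] (x : ℝ → 𝕜) (z : GQ g 𝕜) : Prop :=
  ∃ h : g.Mod x, GQ.mk g x h = z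

def Nt.mk (g : Gauge) (n : ℝ → ℕ) (h : g.NMod n) : Nt g := Quotient.mk (natSetoid g) ⟨n, h⟩

def Nt.IsRep (g : Gauge) (n : ℝ → ℕ) (m : Nt g) : Prop := ∃ h : g.NMod n, Nt.mk g n h = m

/-- dρ^q as an element of ℝ~. -/
def Gauge.dpow (g : Gauge) (q : ℕ) : Rt g := GQ.mk g (fun ε => g.ρ ε ^ q) (g.mod_pow q)

/-- dρ^(−q) as an element of ℝ~. -/
def Gauge.dpowNeg (g : Gauge) (q : ℕ) : Rt g := GQ.mk g (fun ε => g.ρ ε ^ (-(q:ℤ))) (g.mod_zpow_neg q)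

def GQ.zero (g : Gauge) (𝕜 : Type) [RCLike 𝕜] : GQ g 𝕜 :=
  GQ.mk g (fun _ => 0) (g.mod_const 0 (by simp))

def GQ.one (g : Gauge) (𝕜 : Type) [RCLike 𝕜] : GQ g 𝕜 :=
  GQ.mk g (fun _ => 1) (g.mod_const 1 (by simp))

variable {𝕜 : Type} [RCLike 𝕜]

/-- Order relation on ℝ~ (via some representatives). -/
def Rt.le (g : Gauge) (x y : Rt g) : Prop :=
  ∃ a b : {u : ℝ → ℝ // g.Mod u}, Quotient.mk (gSetoid g ℝ) a = x ∧
    Quotient.mk (gSetoid g ℝ) b = y ∧ EvS fun ε => a.1 ε ≤ b.1 ε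

/-- Strict order relation on ℝ~: `x < y` iff `y − x ≥ dρ^m` for some m. -/
def Rt.lt (g : Gauge) (x y : Rt g) : Prop :=
  ∃ a b : {u : ℝ → ℝ // g.Mod u}, Quotient.mk (gSetoid g ℝ) a = x ∧
    Quotient.mk (gSetoid g ℝ) b = y ∧ ∃ m : ℕ, EvS fun ε => g.ρ ε ^ m ≤ b.1 ε - a.1 ε

/-- Order on ℕ~. -/
def Nt.le (g : Gauge) (m n : Nt g) : Prop :=
  ∃ a b : {k : ℝ → ℕ // g.NMod k}, Quotient.mk (natSetoid g) a = m ∧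
    Quotient.mk (natSetoid g) b = n ∧ EvS fun ε => a.1 ε ≤ b.1 ε

/-- The relation `|z − w| < r` between generalized numbers, r ∈ ℝ~. -/
def GQ.absLt (g : Gauge) (z w : GQ g 𝕜) (r : Rt g) : Prop :=
  ∃ a b : {x : ℝ → 𝕜 // g.Mod x}, ∃ u : {x : ℝ → ℝ // g.Mod x},
    Quotient.mk (gSetoid g 𝕜) a = z ∧ Quotient.mk (gSetoid g 𝕜) b = w ∧
    Quotient.mk (gSetoid g ℝ) u = r ∧
    ∃ m : ℕ, EvS fun ε => ‖a.1 ε - b.1 ε‖ + g.ρ ε ^ m ≤ u.1 ε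

/-- The relation `|z − w| ≤ r`. -/
def GQ.absLe (g : Gauge) (z w : GQ g 𝕜) (r : Rt g) : Prop :=
  ∃ a b : {x : ℝ → 𝕜 // g.Mod x}, ∃ u : {x : ℝ → ℝ // g.Mod x},
    Quotient.mk (gSetoid g 𝕜) a = z ∧ Quotient.mk (gSetoid g 𝕜) b = w ∧
    Quotient.mk (gSetoid g ℝ) u = r ∧ EvS fun ε => ‖a.1 ε - b.1 ε‖ ≤ u.1 ε

/-- `x ∈ ℂ~` is invertible. -/
def GQ.Invertible (g : Gauge) (x : GQ g 𝕜) : Prop :=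
  ∃ a : {u : ℝ → 𝕜 // g.Mod u}, Quotient.mk (gSetoid g 𝕜) a = x ∧
    ∃ m : ℕ, EvS fun ε => g.ρ ε ^ m ≤ ‖a.1 ε‖

/-- l is the hyperlimit of the hypersequence a. -/
def HyperLim (g : Gauge) (a : Nt g → GQ g 𝕜) (l : GQ g 𝕜) : Prop :=
  ∀ q : ℕ, ∃ M : Nt g, ∀ n : Nt g, Nt.le g M n → GQ.absLt g (a n) l (g.dpow q)

/-- ρ-moderate over hypersums. -/
def Gauge.SMod (g : Gauge) (A : ℕ → ℝ → 𝕜) : Prop :=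
  ∀ N : ℝ → ℕ, g.NMod N → g.Mod fun ε => ∑ n ∈ Finset.range (N ε + 1), A n ε

/-- Hyperseries equivalence of coefficient nets. -/
def Gauge.SEquiv (g : Gauge) (A B : ℕ → ℝ → 𝕜) : Prop :=
  ∀ N M : ℝ → ℕ, g.NMod N → g.NMod M →
    g.Negl fun ε => ∑ n ∈ Finset.Icc (N ε) (M ε), (A n ε - B n ε)

theorem nat_eq_of_abs_sub_lt_one {a b : ℕ} (h : |(a:ℝ) - b| < 1) : a = b := by
  rcases lt_trichotomy a b with hlt | he | hgt
  · exfalso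
    have h1 : (a:ℝ) + 1 ≤ b := by exact_mod_cast Nat.succ_le_of_lt hlt
    have h2 := abs_lt.mp h
    linarith [h2.1]
  · exact he
  · exfalso
    have h1 : (b:ℝ) + 1 ≤ a := by exact_mod_cast Nat.succ_le_of_lt hgt
    have h2 := abs_lt.mp h
    linarith [h2.2]

theorem natEqEv (g : Gauge) {N M : ℝ → ℕ} (h : g.Negl fun ε => (N ε : ℝ) - M ε) :
    EvS fun ε => N ε = M ε := by
  refine ((h 1).and (g.evs_le (by norm_num : (0:ℝ) < 1/2))).mono fun ε hε hε1 hh => ?_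
  obtain ⟨h1, h2⟩ := hh
  apply nat_eq_of_abs_sub_lt_one
  have : ‖(N ε : ℝ) - M ε‖ = |(N ε : ℝ) - M ε| := Real.norm_eq_abs _
  rw [this] at h1
  calc |(N ε:ℝ) - M ε| ≤ g.ρ ε ^ 1 := h1
    _ = g.ρ ε := pow_one _
    _ ≤ 1/2 := h2
    _ < 1 := by norm_num

/-- Lift a representative-level construction indexed by hypernaturals to ℕ~. -/
def Nt.lift (g : Gauge) (F : (ℝ → ℕ) → ℝ → 𝕜)
    (hmod : ∀ N, g.NMod N → g.Mod (F N))
    (hcong : ∀ N M : ℝ → ℕ, EvS (fun ε => N ε = M ε) → EvS fun ε => F N ε = F M ε) :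
    Nt g → GQ g 𝕜 :=
  Quotient.lift (fun N => GQ.mk g (F N.1) (hmod N.1 N.2)) (by
    intro a b hab
    apply Quotient.sound
    exact g.negl_of_evs_eq (hcong a.1 b.1 (natEqEv g hab)))

def Nt.lift₂ (g : Gauge) (F : (ℝ → ℕ) → (ℝ → ℕ) → ℝ → 𝕜)
    (hmod : ∀ N M, g.NMod N → g.NMod M → g.Mod (F N M))
    (hcong : ∀ N N' M M' : ℝ → ℕ, EvS (fun ε => N ε = N' ε) → EvS (fun ε => M ε = M' ε) →
      EvS fun ε => F N M ε = F N' M' ε) :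
    Nt g → Nt g → GQ g 𝕜 :=
  Quotient.lift₂ (fun N M => GQ.mk g (F N.1 M.1) (hmod N.1 M.1 N.2 M.2)) (by
    intro a b a' b' ha hb
    apply Quotient.sound
    exact g.negl_of_evs_eq (hcong a.1 a'.1 b.1 b'.1 (natEqEv g ha) (natEqEv g hb)))

/-- The hypersequence of partial hypersums N ↦ Σ_{n=0}^{N} a_n. -/
def partialSum (g : Gauge) (A : ℕ → ℝ → 𝕜) (hA : g.SMod A) : Nt g → GQ g 𝕜 :=
  Nt.lift g (fun N ε => ∑ n ∈ Finset.range (N ε + 1), A n ε) (fun N hN => hA N hN)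
    (fun N M h => h.mono fun ε _ _ he => by (try simp only []); rw [he])

/-- The hyperseries Σ_{n∈ℕ~} a_n converges to s. -/
def HSConv (g : Gauge) (A : ℕ → ℝ → 𝕜) (hA : g.SMod A) (s : GQ g 𝕜) : Prop :=
  HyperLim g (partialSum g A hA) s

theorem Gauge.NMod.mono {g : Gauge} {a b : ℝ → ℕ} (hb : g.NMod b) (h : ∀ ε, a ε ≤ b ε) :
    g.NMod a := by
  refine Gauge.Mod.of_norm_le hb fun ε _ _ => ?_
  rw [Real.norm_eq_abs, abs_of_nonneg (Nat.cast_nonneg _), abs_of_nonneg (Nat.cast_nonneg _)]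
  exact_mod_cast h ε

theorem Gauge.SMod.range {g : Gauge} {A : ℕ → ℝ → 𝕜} (hA : g.SMod A) {N : ℝ → ℕ}
    (hN : g.NMod N) : g.Mod fun ε => ∑ n ∈ Finset.range (N ε), A n ε := by
  have hN' : g.NMod fun ε => N ε - 1 := hN.mono fun ε => Nat.sub_le _ _
  obtain ⟨K, hK⟩ := hA _ hN'
  refine ⟨K, hK.mono fun ε hε hε1 h => ?_⟩
  rcases Nat.eq_zero_or_pos (N ε) with h0 | h0
  · show ‖∑ n ∈ Finset.range (N ε), A n ε‖ ≤ _
    rw [h0]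
    simp only [Finset.range_zero, Finset.sum_empty, norm_zero]
    exact le_trans (norm_nonneg _) h
  · have he : N ε - 1 + 1 = N ε := Nat.succ_pred_eq_of_pos h0
    show ‖∑ n ∈ Finset.range (N ε), A n ε‖ ≤ _
    rw [← he]
    exact h

theorem Gauge.SMod.termMod {g : Gauge} {A : ℕ → ℝ → 𝕜} (hA : g.SMod A) {N : ℝ → ℕ}
    (hN : g.NMod N) : g.Mod fun ε => A (N ε) ε := by
  have h := (hA N hN).sub (hA.range hN)
  have heq : (fun ε => (∑ n ∈ Finset.range (N ε + 1), A n ε) -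
      ∑ n ∈ Finset.range (N ε), A n ε) = fun ε => A (N ε) ε := by
    funext ε
    rw [Finset.sum_range_succ]
    ring
  rwa [heq] at h

/-- The extension of the terms of a hyperseries to ℕ~ : n ↦ a_n. -/
def GQ.term (g : Gauge) (A : ℕ → ℝ → 𝕜) (hA : g.SMod A) : Nt g → GQ g 𝕜 :=
  Nt.lift g (fun N ε => A (N ε) ε) (fun _ hN => hA.termMod hN)
    (fun N M h => h.mono fun ε _ _ he => by (try simp only []); rw [he])

theorem norm_sum_Icc_le (A : ℕ → 𝕜) (N M : ℕ) :
    ‖∑ n ∈ Finset.Icc N M, A n‖ ≤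
      ‖∑ n ∈ Finset.range (M+1), A n‖ + ‖∑ n ∈ Finset.range N, A n‖ := by
  rcases le_or_gt N (M+1) with h | h
  · have key : (∑ n ∈ Finset.range N, A n) + (∑ n ∈ Finset.Icc N M, A n)
        = ∑ n ∈ Finset.range (M+1), A n := by
      rw [Finset.range_eq_Ico, Finset.range_eq_Ico, ← Finset.Ico_add_one_right_eq_Icc]
      exact Finset.sum_Ico_consecutive A (Nat.zero_le N) h
    have heq : ∑ n ∈ Finset.Icc N M, A n
        = (∑ n ∈ Finset.range (M+1), A n) - ∑ n ∈ Finset.range N, A n := by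
      rw [← key]; ring
    rw [heq]
    exact norm_sub_le _ _
  · rw [Finset.Icc_eq_empty (by omega)]
    simp only [Finset.sum_empty, norm_zero]
    positivity

theorem Gauge.SMod.IccMod {g : Gauge} {A : ℕ → ℝ → 𝕜} (hA : g.SMod A) {N M : ℝ → ℕ}
    (hN : g.NMod N) (hM : g.NMod M) :
    g.Mod fun ε => ∑ n ∈ Finset.Icc (N ε) (M ε), A n ε := by
  have h1 := (hA M hM).norm
  have h2 := (hA.range hN).norm
  refine Gauge.Mod.of_norm_le (h1.add h2) fun ε _ _ => ?_
  have hnn : (0:ℝ) ≤ ‖∑ n ∈ Finset.range (M ε + 1), A n ε‖ + ‖∑ n ∈ Finset.range (N ε), A n ε‖ :=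
    add_nonneg (norm_nonneg _) (norm_nonneg _)
  rw [abs_of_nonneg hnn]
  exact norm_sum_Icc_le _ _ _

/-- The hypersum Σ_{n=N}^{M} a_n as a function of N, M ∈ ℕ~. -/
def hypersum (g : Gauge) (A : ℕ → ℝ → 𝕜) (hA : g.SMod A) : Nt g → Nt g → GQ g 𝕜 :=
  Nt.lift₂ g (fun N M ε => ∑ n ∈ Finset.Icc (N ε) (M ε), A n ε)
    (fun _ _ hN hM => hA.IccMod hN hM)
    (fun N N' M M' h h' => (h.and h').mono fun ε _ _ he => by
      (try simp only []); rw [he.1, he.2])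

theorem Gauge.NMod.add {g : Gauge} {a b : ℝ → ℕ} (ha : g.NMod a) (hb : g.NMod b) :
    g.NMod fun ε => a ε + b ε := by
  have h := Gauge.Mod.add (𝕜 := ℝ) ha hb
  show g.Mod fun ε => ((a ε + b ε : ℕ) : ℝ)
  have heq : (fun ε => ((a ε + b ε : ℕ) : ℝ)) = fun ε => ((a ε : ℝ) + (b ε : ℝ)) := by
    funext ε; push_cast; ring
  rwa [heq]

/-- Addition on ℕ~. -/
def Nt.add (g : Gauge) : Nt g → Nt g → Nt g :=
  Quotient.lift₂ (fun a b => Nt.mk g (fun ε => a.1 ε + b.1 ε) (a.2.add b.2)) (by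
    intro a b a' b' ha hb
    apply Quotient.sound
    have h := ((natEqEv g ha).and (natEqEv g hb))
    exact g.negl_of_evs_eq (h.mono fun ε _ _ he => by
      show ((a.1 ε + b.1 ε : ℕ) : ℝ) = ((a'.1 ε + b'.1 ε : ℕ) : ℝ)
      rw [he.1, he.2]))

/-- Subtraction on generalized numbers. -/
def GQ.sub (g : Gauge) : GQ g 𝕜 → GQ g 𝕜 → GQ g 𝕜 :=
  Quotient.lift₂ (fun a b => GQ.mk g (fun ε => a.1 ε - b.1 ε) (a.2.sub b.2)) (by
    intro a b a' b' ha hb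
    apply Quotient.sound
    show g.Negl _
    have h := Gauge.Negl.sub ha hb
    have heq : (fun ε => (a.1 ε - a'.1 ε) - (b.1 ε - b'.1 ε))
        = fun ε => (a.1 ε - b.1 ε) - (a'.1 ε - b'.1 ε) := by funext ε; ring
    rwa [heq] at h)

/-- Multiplication on generalized numbers. -/
def GQ.mul (g : Gauge) : GQ g 𝕜 → GQ g 𝕜 → GQ g 𝕜 :=
  Quotient.lift₂ (fun a b => GQ.mk g (fun ε => a.1 ε * b.1 ε) (a.2.mul b.2)) (by
    intro a b a' b' ha hb
    apply Quotient.sound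
    show g.Negl _
    have h1 : g.Negl fun ε => (a.1 ε - a'.1 ε) * b.1 ε := Gauge.Negl.mul_mod ha b.2
    have h2 : g.Negl fun ε => (b.1 ε - b'.1 ε) * a'.1 ε := Gauge.Negl.mul_mod hb a'.2
    have h := h1.add h2
    have heq : (fun ε => (a.1 ε - a'.1 ε) * b.1 ε + (b.1 ε - b'.1 ε) * a'.1 ε)
        = fun ε => a.1 ε * b.1 ε - a'.1 ε * b'.1 ε := by funext ε; ring
    rwa [heq] at h)

/-- The absolute value |·| : ℂ~ → ℝ~. -/
def GQ.abs (g : Gauge) : GQ g 𝕜 → Rt g :=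
  Quotient.lift (fun a => GQ.mk g (fun ε => ‖a.1 ε‖) a.2.norm) (by
    intro a b hab
    apply Quotient.sound
    show g.Negl _
    intro q
    refine (hab q).mono fun ε _ _ h => ?_
    show ‖‖a.1 ε‖ - ‖b.1 ε‖‖ ≤ _
    rw [Real.norm_eq_abs]
    exact le_trans (abs_norm_sub_norm_le _ _) h)

/-- Weakly ρ-moderate coefficient nets. -/
def Gauge.WMod (g : Gauge) (a : ℕ → ℝ → ℂ) : Prop :=
  ∃ Q R : ℕ, EvS fun ε => ∀ n : ℕ, ‖a n ε‖ ≤ g.ρ ε ^ (-((n * Q + R : ℕ) : ℤ))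

/-- Strong ρ-equivalence of coefficient nets. -/
def Gauge.StrEquiv (g : Gauge) (a b : ℕ → ℝ → ℂ) : Prop :=
  ∀ q r : ℕ, EvS fun ε => ∀ n : ℕ, ‖a n ε - b n ε‖ ≤ g.ρ ε ^ (n * q + r)

/-- The net of radii of convergence r_ε = (limsup_n |a_{nε}|^{1/n})⁻¹ ∈ [0,∞]. -/
def radNet (a : ℕ → ℝ → ℂ) (ε : ℝ) : ENNReal :=
  (Filter.limsup (fun n : ℕ => ENNReal.ofReal (‖a n ε‖ ^ ((n : ℝ)⁻¹))) Filter.atTop)⁻¹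

/-- Condition (i): |z − c| < rad (a_n)_c, as classes (via representatives). -/
def RadLt (g : Gauge) (a : ℕ → ℝ → ℂ) (z c : Ct g) : Prop :=
  ∃ zr cr : ℝ → ℂ, ∃ a' : ℕ → ℝ → ℂ, IsRep g zr z ∧ IsRep g cr c ∧
    g.WMod a' ∧ g.StrEquiv a a' ∧
    ∃ m : ℕ, EvS fun ε => ENNReal.ofReal (‖zr ε - cr ε‖ + g.ρ ε ^ m) ≤ radNet a' ε

/-- The coefficient net of the hyper-power series Σ a_n (z−c)^n. -/
def PSeriesNet (a : ℕ → ℝ → ℂ) (zr cr : ℝ → ℂ) : ℕ → ℝ → ℂ :=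
  fun n ε => a n ε * (zr ε - cr ε) ^ n

/-- Conditions (ii)-(iv) of the definition of the set of convergence, for given
representatives. -/
def ConvConds (g : Gauge) (a : ℕ → ℝ → ℂ) (zr cr : ℝ → ℂ) (z : Ct g) : Prop :=
  ∃ hS : g.SMod (PSeriesNet a zr cr),
    (EvS fun ε => Summable fun n : ℕ => PSeriesNet a zr cr n ε) ∧
    (∃ hm : g.Mod fun ε => ∑' n : ℕ, PSeriesNet a zr cr n ε,
      HyperLim g (partialSum g _ hS) (GQ.mk g _ hm)) ∧
    (∀ zr' : ℝ → ℂ, IsRep g zr' z →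
      (EvS fun ε => Summable fun n : ℕ => (n : ℂ) * a n ε * (zr' ε - cr ε) ^ (n - 1)) ∧
      g.Mod fun ε => ∑' n : ℕ, (n : ℂ) * a n ε * (zr' ε - cr ε) ^ (n - 1))

/-- The set of convergence σ((a_n)_c, c) of a hyper-power series. -/
def convSet (g : Gauge) (a : ℕ → ℝ → ℂ) (c : Ct g) : Set (Ct g) :=
  { z | RadLt g a z c ∧
      ∃ zr cr : ℝ → ℂ, ∃ a' : ℕ → ℝ → ℂ, IsRep g zr z ∧ IsRep g cr c ∧
        g.WMod a' ∧ g.StrEquiv a a' ∧ ConvConds g a' zr cr z }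

/-- Sharply open subsets of ℂ~. -/
def SharplyOpen (g : Gauge) (U : Set (Ct g)) : Prop :=
  ∀ z ∈ U, ∃ r : Rt g, Rt.lt g (GQ.zero g ℝ) r ∧ ∀ w : Ct g, GQ.absLt g w z r → w ∈ U

/-- `P ε` for all small ε in L. -/
def EvSOn (L : Set ℝ) (P : ℝ → Prop) : Prop :=
  ∃ ε₀ : ℝ, 0 < ε₀ ∧ ε₀ ≤ 1 ∧ ∀ ε ∈ L, 0 < ε → ε ≤ ε₀ → P ε

/-- x ∈ ℂ~ is invertible on the subpoint L. -/
def GQ.InvertibleOn (g : Gauge) {𝕜 : Type} [RCLike 𝕜] (L : Set ℝ) (x : GQ g 𝕜) : Prop :=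
  ∃ a : {u : ℝ → 𝕜 // g.Mod u}, Quotient.mk (gSetoid g 𝕜) a = x ∧
    ∃ m : ℕ, EvSOn L fun ε => g.ρ ε ^ m ≤ ‖a.1 ε‖

theorem Gauge.nmod_const (g : Gauge) (c : ℕ) : g.NMod fun _ => c := by
  refine ⟨c + 1, (g.evs_le (by positivity : (0:ℝ) < 1/(c+1))).mono fun ε hε hε1 h3 => ?_⟩
  have hρ := g.pos ε hε hε1
  show ‖((c:ℕ) : ℝ)‖ ≤ _
  rw [Real.norm_eq_abs, abs_of_nonneg (Nat.cast_nonneg _)]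
  have hc1 : (0:ℝ) < (c:ℝ) + 1 := by positivity
  calc (c:ℝ) ≤ 1 / g.ρ ε := by
        rw [le_div_iff₀ hρ]
        calc (c:ℝ) * g.ρ ε ≤ (c:ℝ) * (1/(c+1)) :=
              mul_le_mul_of_nonneg_left h3 (Nat.cast_nonneg c)
          _ ≤ 1 := by rw [mul_one_div, div_le_one hc1]; linarith
    _ = g.ρ ε ^ (-((1:ℕ):ℤ)) := by
        rw [show (-((1:ℕ):ℤ)) = (-1:ℤ) by norm_num, zpow_neg_one, one_div]
    _ ≤ g.ρ ε ^ (-((c+1:ℕ):ℤ)) := g.zpow_neg_le hε hε1 (by omega)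

theorem Gauge.SMod.shift {g : Gauge} {𝕜 : Type} [RCLike 𝕜] {A : ℕ → ℝ → 𝕜}
    (hA : g.SMod A) (N₀ : ℕ) : g.SMod fun n ε => A (n + N₀) ε := by
  intro K hK
  have h1 := hA (fun ε => N₀ + K ε) ((g.nmod_const N₀).add hK)
  have h2 := hA.range (g.nmod_const N₀)
  have h := h1.sub h2
  have heq : (fun ε => (∑ n ∈ Finset.range (N₀ + K ε + 1), A n ε) -
      ∑ n ∈ Finset.range N₀, A n ε) = fun ε => ∑ n ∈ Finset.range (K ε + 1), A (n + N₀) ε := by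
    funext ε
    have e1 : (∑ n ∈ Finset.range N₀, A n ε) + (∑ n ∈ Finset.Ico N₀ (N₀ + K ε + 1), A n ε)
        = ∑ n ∈ Finset.range (N₀ + K ε + 1), A n ε :=
      Finset.sum_range_add_sum_Ico _ (by omega)
    have e2 : ∑ n ∈ Finset.Ico N₀ (N₀ + K ε + 1), A n ε
        = ∑ n ∈ Finset.range (K ε + 1), A (N₀ + n) ε := by
      rw [Finset.sum_Ico_eq_sum_range, show N₀ + K ε + 1 - N₀ = K ε + 1 by omega]
    rw [← e1, e2]
    rw [add_sub_cancel_left]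
    exact Finset.sum_congr rfl fun n _ => by rw [Nat.add_comm]
  rwa [heq] at h

/-- A net of holomorphic functions on a net of open sets. -/
structure GHFData where
  F : ℝ → ℂ → ℂ
  Ω : ℝ → Set ℂ
  isOpen : ∀ ε : ℝ, IsOpen (Ω ε)
  holo : ∀ ε : ℝ, DifferentiableOn ℂ (F ε) (Ω ε)

/-- `zr` is a representative of z as in the definition of GHF: it takes values in the
domains, all derivative nets are moderate, and f(z) = [F_ε(z_ε)]. -/
def GoodRep (g : Gauge) (D : GHFData) (f : Ct g → Ct g) (zr : ℝ → ℂ) (z : Ct g) : Prop :=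
  IsRep g zr z ∧ (EvS fun ε => zr ε ∈ D.Ω ε) ∧
  (∀ n : ℕ, g.Mod fun ε => iteratedDeriv n (D.F ε) (zr ε)) ∧
  ∃ hm : g.Mod fun ε => D.F ε (zr ε), f z = GQ.mk g _ hm

/-- f : U → ℂ~ is a generalized holomorphic function defined by the net D. -/
def IsGHF (g : Gauge) (U : Set (Ct g)) (f : Ct g → Ct g) (D : GHFData) : Prop :=
  (∀ z ∈ U, ∃ zr : ℝ → ℂ, GoodRep g D f zr z) ∧
  ∀ z ∈ U, ∀ zr zr' : ℝ → ℂ, GoodRep g D f zr z → GoodRep g D f zr' z → ∀ n : ℕ,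
    g.Negl fun ε => iteratedDeriv n (D.F ε) (zr ε) - iteratedDeriv n (D.F ε) (zr' ε)

section Helpers

theorem Gauge.mod_const' (g : Gauge) {𝕜 : Type} [RCLike 𝕜] (c : 𝕜) : g.Mod (fun _ => c) := by
  refine ⟨1, (g.evs_le (by positivity : (0:ℝ) < 1/(‖c‖+1))).mono fun ε hε hε1 h => ?_⟩
  have hρ := g.pos ε hε hε1
  have hc : (0:ℝ) < ‖c‖ + 1 := by positivity
  calc ‖c‖ ≤ ‖c‖ + 1 := by linarith
    _ ≤ 1 / g.ρ ε := by
        rw [le_div_iff₀ hρ]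
        calc (‖c‖+1) * g.ρ ε ≤ (‖c‖+1) * (1/(‖c‖+1)) := by
              exact mul_le_mul_of_nonneg_left h (by positivity)
          _ = 1 := by field_simp
    _ = g.ρ ε ^ (-((1:ℕ):ℤ)) := by
        rw [show (-((1:ℕ):ℤ)) = (-1:ℤ) by norm_num, zpow_neg_one, one_div]

theorem Gauge.Negl.norm' {g : Gauge} {𝕜 : Type} [RCLike 𝕜] {x : ℝ → 𝕜} (h : g.Negl x) :
    g.Negl fun ε => ‖x ε‖ := fun q => (h q).mono fun ε _ _ hx => by
  show ‖‖x ε‖‖ ≤ _; rwa [norm_norm]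

theorem negl_sum_norms (g : Gauge) (x : ℕ → ℝ → ℂ) (k : ℕ) (h : ∀ j < k, g.Negl (x j)) :
    g.Negl fun ε => ∑ j ∈ Finset.range k, ‖x j ε‖ := by
  induction k with
  | zero =>
    intro q
    exact ⟨1, one_pos, le_rfl, fun ε hε hε1 => by
      simp only [Finset.range_zero, Finset.sum_empty, norm_zero]
      exact pow_nonneg (g.pos ε hε hε1).le q⟩
  | succ k ih =>
    have h1 := ih (fun j hj => h j (by omega))
    have h2 := (h k (by omega)).norm'
    have hadd := h1.add h2
    intro q
    exact (hadd q).mono fun ε _ _ hx => by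
      show ‖∑ j ∈ Finset.range (k+1), ‖x j ε‖‖ ≤ _
      rwa [Finset.sum_range_succ]

theorem geom_icc (u : ℝ) (h0 : 0 ≤ u) (h : u ≤ 1/2) (a b : ℕ) :
    ∑ n ∈ Finset.Icc a b, u ^ n ≤ 2 * u ^ a := by
  rw [← Finset.Ico_add_one_right_eq_Icc, Finset.sum_Ico_eq_sum_range]
  have hhalf : ∀ J : ℕ, ∑ j ∈ Finset.range J, (1/2:ℝ) ^ j ≤ 2 := by
    intro J
    rw [geom_sum_eq (by norm_num)]
    have h1 : (0:ℝ) ≤ (1/2:ℝ) ^ J := by positivity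
    have h2 : ((1/2:ℝ) ^ J - 1)/((1/2:ℝ) - 1) = 2 - 2 * (1/2:ℝ)^J := by ring
    rw [h2]; linarith
  calc ∑ j ∈ Finset.range (b + 1 - a), u ^ (a + j)
      = u ^ a * ∑ j ∈ Finset.range (b + 1 - a), u ^ j := by
        rw [Finset.mul_sum]; exact Finset.sum_congr rfl fun j _ => by rw [pow_add]
    _ ≤ u ^ a * ∑ j ∈ Finset.range (b + 1 - a), (1/2:ℝ) ^ j := by
        apply mul_le_mul_of_nonneg_left _ (pow_nonneg h0 a)
        exact Finset.sum_le_sum fun j _ => pow_le_pow_left₀ h0 h j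
    _ ≤ u ^ a * 2 := mul_le_mul_of_nonneg_left (hhalf _) (pow_nonneg h0 a)
    _ = 2 * u ^ a := by ring

theorem main_est (ρ : ℝ) (hρ : 0 < ρ)
    (q Q R k N : ℕ) (hkN : k ≤ N)
    (w : ℂ) (a : ℕ → ℂ)
    (hw1 : ‖w‖ ≤ 1)
    (hup : ∀ n, ‖a n‖ ≤ (ρ ^ (n * Q + R))⁻¹)
    (hlow : ρ ^ q ≤ ‖a k‖)
    (hsmall : ∑ j ∈ Finset.range k, ‖a j‖ ≤ 1/4 * (ρ ^ q * ‖w‖ ^ k))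
    (hhalf : (ρ ^ Q)⁻¹ * ‖w‖ ≤ 1/2)
    (htail : (ρ ^ R)⁻¹ * ((ρ ^ Q)⁻¹) ^ (k + 1) * 2 * ‖w‖ ≤ 1/4 * ρ ^ q) :
    1/2 * (ρ ^ q * ‖w‖ ^ k) ≤ ‖∑ n ∈ Finset.range (N + 1), a n * w ^ n‖ := by
  have hw0 : (0:ℝ) ≤ ‖w‖ := norm_nonneg _
  have hρR : (0:ℝ) < ρ ^ R := pow_pos hρ R
  have hρQ : (0:ℝ) < ρ ^ Q := pow_pos hρ Q
  set u : ℝ := (ρ ^ Q)⁻¹ * ‖w‖ with hu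
  have hu0 : 0 ≤ u := by positivity
  -- split the sum
  have hsplit : ∑ n ∈ Finset.range (N + 1), a n * w ^ n
      = (∑ n ∈ Finset.range k, a n * w ^ n) + a k * w ^ k
        + ∑ n ∈ Finset.Icc (k + 1) N, a n * w ^ n := by
    have e1 : (∑ n ∈ Finset.range (k+1), a n * w ^ n)
        + ∑ n ∈ Finset.Ico (k+1) (N+1), a n * w ^ n
        = ∑ n ∈ Finset.range (N + 1), a n * w ^ n :=
      Finset.sum_range_add_sum_Ico _ (by omega)
    rw [← e1, Finset.sum_range_succ, Finset.Ico_add_one_right_eq_Icc]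
  -- bound on the head
  have hhead : ‖∑ n ∈ Finset.range k, a n * w ^ n‖ ≤ 1/4 * (ρ ^ q * ‖w‖ ^ k) := by
    calc ‖∑ n ∈ Finset.range k, a n * w ^ n‖ ≤ ∑ n ∈ Finset.range k, ‖a n * w ^ n‖ :=
          norm_sum_le _ _
      _ ≤ ∑ n ∈ Finset.range k, ‖a n‖ := by
          apply Finset.sum_le_sum
          intro n _
          rw [norm_mul, norm_pow]
          calc ‖a n‖ * ‖w‖ ^ n ≤ ‖a n‖ * 1 :=
                mul_le_mul_of_nonneg_left (pow_le_one₀ hw0 hw1) (norm_nonneg _)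
            _ = ‖a n‖ := mul_one _
      _ ≤ 1/4 * (ρ ^ q * ‖w‖ ^ k) := hsmall
  -- bound on the tail
  have htailb : ‖∑ n ∈ Finset.Icc (k+1) N, a n * w ^ n‖ ≤ 1/4 * (ρ ^ q * ‖w‖ ^ k) := by
    have hterm : ∀ n : ℕ, ‖a n * w ^ n‖ ≤ (ρ ^ R)⁻¹ * u ^ n := by
      intro n
      rw [norm_mul, norm_pow]
      have : (ρ ^ (n * Q + R))⁻¹ = (ρ ^ R)⁻¹ * ((ρ ^ Q)⁻¹) ^ n := by
        rw [pow_add, pow_mul', mul_inv, ← inv_pow, mul_comm]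
      calc ‖a n‖ * ‖w‖ ^ n ≤ (ρ ^ (n * Q + R))⁻¹ * ‖w‖ ^ n :=
            mul_le_mul_of_nonneg_right (hup n) (pow_nonneg hw0 n)
        _ = (ρ ^ R)⁻¹ * (((ρ ^ Q)⁻¹) ^ n * ‖w‖ ^ n) := by rw [this]; ring
        _ = (ρ ^ R)⁻¹ * u ^ n := by rw [hu, mul_pow]
    calc ‖∑ n ∈ Finset.Icc (k+1) N, a n * w ^ n‖
        ≤ ∑ n ∈ Finset.Icc (k+1) N, ‖a n * w ^ n‖ := norm_sum_le _ _
      _ ≤ ∑ n ∈ Finset.Icc (k+1) N, (ρ ^ R)⁻¹ * u ^ n :=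
          Finset.sum_le_sum fun n _ => hterm n
      _ = (ρ ^ R)⁻¹ * ∑ n ∈ Finset.Icc (k+1) N, u ^ n := by rw [Finset.mul_sum]
      _ ≤ (ρ ^ R)⁻¹ * (2 * u ^ (k+1)) := by
          apply mul_le_mul_of_nonneg_left (geom_icc u hu0 hhalf _ _) (by positivity)
      _ = ((ρ ^ R)⁻¹ * ((ρ ^ Q)⁻¹) ^ (k+1) * 2 * ‖w‖) * ‖w‖ ^ k := by
          rw [hu, mul_pow, pow_succ]
          ring
      _ ≤ (1/4 * ρ ^ q) * ‖w‖ ^ k :=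
          mul_le_mul_of_nonneg_right htail (pow_nonneg hw0 k)
      _ = 1/4 * (ρ ^ q * ‖w‖ ^ k) := by ring
  -- the main term
  have hmain : ρ ^ q * ‖w‖ ^ k ≤ ‖a k * w ^ k‖ := by
    rw [norm_mul, norm_pow]
    exact mul_le_mul_of_nonneg_right hlow (pow_nonneg hw0 k)
  -- combine
  rw [hsplit]
  set X := ∑ n ∈ Finset.range k, a n * w ^ n
  set Y := a k * w ^ k
  set Z := ∑ n ∈ Finset.Icc (k+1) N, a n * w ^ n
  have h1 : ‖Y‖ ≤ ‖X + Y + Z‖ + ‖X‖ + ‖Z‖ := by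
    have : Y = (X + Y + Z) + (-X) + (-Z) := by ring
    calc ‖Y‖ = ‖(X + Y + Z) + (-X) + (-Z)‖ := by rw [← this]
      _ ≤ ‖(X + Y + Z) + (-X)‖ + ‖-Z‖ := norm_add_le _ _
      _ ≤ ‖X + Y + Z‖ + ‖-X‖ + ‖-Z‖ := by
          have := norm_add_le (X + Y + Z) (-X)
          linarith
      _ = ‖X + Y + Z‖ + ‖X‖ + ‖Z‖ := by rw [norm_neg, norm_neg]
  linarith

end Helpers

set_option maxHeartbeats 2000000

/-- isolated zeros on a subpoint for generalized holomorphic functions. -/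
theorem stmt16 (g : Gauge) (U : Set (Ct g)) (hU : SharplyOpen g U) (z₀ : Ct g)
    (hz₀U : z₀ ∈ U) (f : Ct g → Ct g) (D : GHFData) (hGHF : IsGHF g U f D)
    (z0r : ℝ → ℂ) (hgood : GoodRep g D f z0r z₀)
    (T : ℕ → ℝ → ℂ)
    (hTdef : T = fun n ε => iteratedDeriv n (D.F ε) (z0r ε) / (n.factorial : ℂ))
    (hTW : g.WMod T)
    (s : Rt g) (hs : Rt.lt g (GQ.zero g ℝ) s)
    (hball : ∀ w : Ct g, GQ.absLt g w z₀ s → w ∈ U ∧ w ∈ convSet g T z₀)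
    (hser : ∀ w : Ct g, GQ.absLt g w z₀ s → ∀ wr : ℝ → ℂ, IsRep g wr w →
      ∃ hS : g.SMod (PSeriesNet T wr z0r), HSConv g (PSeriesNet T wr z0r) hS (f w))
    (hf0 : f z₀ = GQ.zero g ℂ)
    (hn : ∃ n : ℕ, 1 ≤ n ∧ ¬ g.Negl fun ε => iteratedDeriv n (D.F ε) (z0r ε)) :
    ∃ L : Set ℝ, L ⊆ Set.Ioc 0 1 ∧ (∀ δ : ℝ, 0 < δ → ∃ ε ∈ L, ε < δ) ∧
      ∃ r : Rt g, Rt.lt g (GQ.zero g ℝ) r ∧ Rt.le g r s ∧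
        ∀ z : Ct g, GQ.absLt g z z₀ r →
          Rt.lt g (GQ.zero g ℝ) (GQ.abs g (GQ.sub g z z₀)) →
          GQ.InvertibleOn g L (f z) := by
  classical
  obtain ⟨hz0rep, hz0Ω, hz0deriv, hz0m, hfz0⟩ := hgood
  obtain ⟨hz0mod, hz0mk⟩ := hz0rep
  -- T 0 is negligible
  have hF0negl : g.Negl fun ε => D.F ε (z0r ε) := by
    have h : g.Negl fun ε => D.F ε (z0r ε) - (fun _ : ℝ => (0:ℂ)) ε :=
      Quotient.exact (hfz0.symm.trans hf0)
    intro q'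
    exact (h q').mono fun ε _ _ hx => by simpa using hx
  have hT0 : g.Negl (T 0) := by
    rw [hTdef]
    intro q'
    refine (hF0negl q').mono fun ε _ _ hx => ?_
    simpa [iteratedDeriv_zero] using hx
  -- there is a non-negligible Taylor coefficient
  have hex : ∃ n : ℕ, ¬ g.Negl (T n) := by
    obtain ⟨n, _hn1, hn2⟩ := hn
    refine ⟨n, fun hneg => hn2 ?_⟩
    have h := hneg.mul_mod (g.mod_const' ((n.factorial : ℂ)))
    have heq : (fun ε => T n ε * (n.factorial : ℂ))
        = fun ε => iteratedDeriv n (D.F ε) (z0r ε) := by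
      funext ε
      rw [hTdef]
      simp only []
      rw [div_mul_cancel₀]
      exact_mod_cast (Nat.factorial_ne_zero n)
    rwa [heq] at h
  set k := Nat.find hex with hkdef
  have hTk : ¬ g.Negl (T k) := Nat.find_spec hex
  have hTj : ∀ j < k, g.Negl (T j) := fun j hj => not_not.mp (Nat.find_min hex hj)
  have hk1 : 1 ≤ k := by
    rcases Nat.eq_zero_or_pos k with h0 | h0
    · exact absurd (h0 ▸ hT0) hTk
    · exact h0
  -- the q witnessing non-negligibility, and the subpoint L
  obtain ⟨q, hq⟩ : ∃ q : ℕ, ∀ ε₀ : ℝ, 0 < ε₀ → ε₀ ≤ 1 →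
      ∃ ε : ℝ, 0 < ε ∧ ε ≤ ε₀ ∧ g.ρ ε ^ q < ‖T k ε‖ := by
    by_contra hcon
    push_neg at hcon
    exact hTk fun q => hcon q
  set L : Set ℝ := {ε : ℝ | 0 < ε ∧ ε ≤ 1 ∧ g.ρ ε ^ q < ‖T k ε‖} with hL
  obtain ⟨Q, R, hQR⟩ := hTW
  -- lower bound for s
  obtain ⟨sa, sb, hsa, hsb, m₀, hm₀⟩ := hs
  have hsaneg : g.Negl sa.1 := by
    have h : g.Negl fun ε => sa.1 ε - (fun _ : ℝ => (0:ℝ)) ε := Quotient.exact hsa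
    intro q'
    exact (h q').mono fun ε _ _ hx => by simpa using hx
  have hsb_lb : EvS fun ε => g.ρ ε ^ (m₀ + 1) ≤ sb.1 ε := by
    refine ((hm₀.and (hsaneg (m₀+2))).and (g.evs_le (by norm_num : (0:ℝ) < 1/2))).mono
      fun ε hε hε1 hh => ?_
    obtain ⟨⟨h1, h2⟩, h3⟩ := hh
    have hρ := g.pos ε hε hε1
    have h1' : g.ρ ε ^ m₀ ≤ sb.1 ε - sa.1 ε := h1
    have h2' : |sa.1 ε| ≤ g.ρ ε ^ (m₀+2) := h2
    have h3' : g.ρ ε ≤ 1/2 := h3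
    rw [abs_le] at h2'
    have hnn : (0:ℝ) ≤ g.ρ ε ^ m₀ := pow_nonneg hρ.le _
    have hsc : g.ρ ε + g.ρ ε * g.ρ ε ≤ 1 := by nlinarith
    have key : g.ρ ε ^ (m₀+1) + g.ρ ε ^ (m₀+2) ≤ g.ρ ε ^ m₀ := by
      calc g.ρ ε ^ (m₀+1) + g.ρ ε ^ (m₀+2)
          = g.ρ ε ^ m₀ * (g.ρ ε + g.ρ ε * g.ρ ε) := by ring
        _ ≤ g.ρ ε ^ m₀ * 1 := mul_le_mul_of_nonneg_left hsc hnn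
        _ = g.ρ ε ^ m₀ := mul_one _
    linarith [h2'.1, h2'.2]
  set B : ℕ := q + R + (k+1)*Q + m₀ + 5 with hB
  set M : ℕ := B + 2 with hM
  refine ⟨L, fun ε hε => ⟨hε.1, hε.2.1⟩, ?_, g.dpow M, ?_, ?_, ?_⟩
  · -- accumulation at 0
    intro δ hδ
    obtain ⟨ε, h1, h2, h3⟩ := hq (min (δ/2) 1) (by positivity) (min_le_right _ _)
    exact ⟨ε, ⟨h1, h2.trans (min_le_right _ _), h3⟩,
      lt_of_le_of_lt (h2.trans (min_le_left _ _)) (by linarith)⟩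
  · -- 0 < r
    exact ⟨⟨fun _ => 0, g.mod_const 0 (by simp)⟩, ⟨fun ε => g.ρ ε ^ M, g.mod_pow M⟩, rfl, rfl,
      M, 1, one_pos, le_rfl, fun ε hε hε1 => by simp⟩
  · -- r ≤ s
    refine ⟨⟨fun ε => g.ρ ε ^ M, g.mod_pow M⟩, sb, rfl, hsb, ?_⟩
    refine hsb_lb.mono fun ε hε hε1 h1 => ?_
    have hρ := g.pos ε hε hε1
    calc g.ρ ε ^ M ≤ g.ρ ε ^ (m₀+1) :=
          pow_le_pow_of_le_one hρ.le (g.le_one ε hε hε1) (by omega)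
      _ ≤ sb.1 ε := h1
  · -- main statement
    intro z hzr hzpos
    obtain ⟨ar, br, u, har, hbr, hu, m₂, hEru⟩ := hzr
    have huneg : g.Negl fun ε => u.1 ε - g.ρ ε ^ M := Quotient.exact hu
    have hbrz0 : g.Negl fun ε => z0r ε - br.1 ε :=
      Quotient.exact (hz0mk.trans hbr.symm)
    -- upper bound on w = ar - z0r
    have hwub : EvS fun ε => ‖ar.1 ε - z0r ε‖ ≤ g.ρ ε ^ B := by
      refine (((hEru.and (huneg (M+1))).and (hbrz0 (M+1))).and
        (g.evs_le (by norm_num : (0:ℝ) < 1/2))).mono fun ε hε hε1 hh => ?_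
      obtain ⟨⟨⟨h1, h2⟩, h3⟩, h4⟩ := hh
      have hρ := g.pos ε hε hε1
      have h1' : ‖ar.1 ε - br.1 ε‖ + g.ρ ε ^ m₂ ≤ u.1 ε := h1
      have h2' : |u.1 ε - g.ρ ε ^ M| ≤ g.ρ ε ^ (M+1) := h2
      have h3' : ‖z0r ε - br.1 ε‖ ≤ g.ρ ε ^ (M+1) := h3
      have h4' : g.ρ ε ≤ 1/2 := h4
      rw [abs_le] at h2'
      have htr : ‖ar.1 ε - z0r ε‖ ≤ ‖ar.1 ε - br.1 ε‖ + ‖z0r ε - br.1 ε‖ := by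
        have e : ar.1 ε - z0r ε = (ar.1 ε - br.1 ε) - (z0r ε - br.1 ε) := by ring
        rw [e]
        exact norm_sub_le _ _
      have hm₂nn : (0:ℝ) ≤ g.ρ ε ^ m₂ := pow_nonneg hρ.le _
      have hnn : (0:ℝ) ≤ g.ρ ε ^ B := pow_nonneg hρ.le _
      have eM : g.ρ ε ^ M = g.ρ ε ^ B * (g.ρ ε * g.ρ ε) := by rw [hM]; ring
      have eM1 : g.ρ ε ^ (M+1) = g.ρ ε ^ B * (g.ρ ε * g.ρ ε * g.ρ ε) := by rw [hM]; ring
      have hsc : g.ρ ε * g.ρ ε + 2*(g.ρ ε * g.ρ ε * g.ρ ε) ≤ 1 := by nlinarith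
      have key : g.ρ ε ^ M + 2 * g.ρ ε ^ (M+1) ≤ g.ρ ε ^ B := by
        calc g.ρ ε ^ M + 2 * g.ρ ε ^ (M+1)
            = g.ρ ε ^ B * (g.ρ ε * g.ρ ε + 2*(g.ρ ε * g.ρ ε * g.ρ ε)) := by
              rw [eM, eM1]; ring
          _ ≤ g.ρ ε ^ B * 1 := mul_le_mul_of_nonneg_left hsc hnn
          _ = g.ρ ε ^ B := mul_one _
      linarith [h2'.2]
    -- lower bound on w from |z - z₀| > 0
    obtain ⟨c, d, hc, hd, p, hp⟩ := hzpos
    have hcneg : g.Negl c.1 := by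
      have h : g.Negl fun ε => c.1 ε - (fun _ : ℝ => (0:ℝ)) ε := Quotient.exact hc
      intro q'
      exact (h q').mono fun ε _ _ hx => by simpa using hx
    have habs : GQ.abs g (GQ.sub g z z₀)
        = Quotient.mk (gSetoid g ℝ) ⟨fun ε => ‖ar.1 ε - br.1 ε‖, (ar.2.sub br.2).norm⟩ := by
      rw [← har, ← hbr]
      rfl
    have hdneg : g.Negl fun ε => d.1 ε - ‖ar.1 ε - br.1 ε‖ := Quotient.exact (hd.trans habs)
    have hwlb : EvS fun ε => g.ρ ε ^ (p + 2) ≤ ‖ar.1 ε - z0r ε‖ := by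
      refine ((((hp.and (hcneg (p+2))).and (hdneg (p+2))).and (hbrz0 (p+3))).and
        (g.evs_le (by norm_num : (0:ℝ) < 1/2))).mono fun ε hε hε1 hh => ?_
      obtain ⟨⟨⟨⟨h1, h2⟩, h3⟩, h4⟩, h5⟩ := hh
      have hρ := g.pos ε hε hε1
      have h1' : g.ρ ε ^ p ≤ d.1 ε - c.1 ε := h1
      have h2' : |c.1 ε| ≤ g.ρ ε ^ (p+2) := h2
      have h3' : |d.1 ε - ‖ar.1 ε - br.1 ε‖| ≤ g.ρ ε ^ (p+2) := h3
      have h4' : ‖z0r ε - br.1 ε‖ ≤ g.ρ ε ^ (p+3) := h4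
      have h5' : g.ρ ε ≤ 1/2 := h5
      rw [abs_le] at h2' h3'
      have htr : ‖ar.1 ε - br.1 ε‖ ≤ ‖ar.1 ε - z0r ε‖ + ‖z0r ε - br.1 ε‖ := by
        have e : ar.1 ε - br.1 ε = (ar.1 ε - z0r ε) + (z0r ε - br.1 ε) := by ring
        rw [e]
        exact norm_add_le _ _
      have hnn : (0:ℝ) ≤ g.ρ ε ^ p := pow_nonneg hρ.le _
      have hsc : 3*(g.ρ ε * g.ρ ε) + g.ρ ε * g.ρ ε * g.ρ ε ≤ 1 := by nlinarith
      have key : g.ρ ε ^ (p+2) + (2 * g.ρ ε ^ (p+2) + g.ρ ε ^ (p+3)) ≤ g.ρ ε ^ p := by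
        calc g.ρ ε ^ (p+2) + (2 * g.ρ ε ^ (p+2) + g.ρ ε ^ (p+3))
            = g.ρ ε ^ p * (3*(g.ρ ε * g.ρ ε) + g.ρ ε * g.ρ ε * g.ρ ε) := by ring
          _ ≤ g.ρ ε ^ p * 1 := mul_le_mul_of_nonneg_left hsc hnn
          _ = g.ρ ε ^ p := mul_one _
      linarith [h2'.1, h3'.1]
    -- z is in the ball of radius s
    have habsS : GQ.absLt g z z₀ s := by
      refine ⟨ar, br, sb, har, hbr, hsb, m₀ + 2, ?_⟩
      refine (((hEru.and (huneg (M+1))).and hsb_lb).and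
        (g.evs_le (by norm_num : (0:ℝ) < 1/2))).mono fun ε hε hε1 hh => ?_
      obtain ⟨⟨⟨h1, h2⟩, h3⟩, h4⟩ := hh
      have hρ := g.pos ε hε hε1
      have hρ1 := g.le_one ε hε hε1
      have h1' : ‖ar.1 ε - br.1 ε‖ + g.ρ ε ^ m₂ ≤ u.1 ε := h1
      have h2' : |u.1 ε - g.ρ ε ^ M| ≤ g.ρ ε ^ (M+1) := h2
      have h3' : g.ρ ε ^ (m₀+1) ≤ sb.1 ε := h3
      have h4' : g.ρ ε ≤ 1/2 := h4
      rw [abs_le] at h2'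
      have hm₂nn : (0:ℝ) ≤ g.ρ ε ^ m₂ := pow_nonneg hρ.le _
      have eM : g.ρ ε ^ M ≤ g.ρ ε ^ (m₀+3) := pow_le_pow_of_le_one hρ.le hρ1 (by omega)
      have eM1 : g.ρ ε ^ (M+1) ≤ g.ρ ε ^ (m₀+3) := pow_le_pow_of_le_one hρ.le hρ1 (by omega)
      have hnn : (0:ℝ) ≤ g.ρ ε ^ (m₀+1) := pow_nonneg hρ.le _
      have hsc : 2*(g.ρ ε * g.ρ ε) + g.ρ ε ≤ 1 := by nlinarith
      have key : 2 * g.ρ ε ^ (m₀+3) + g.ρ ε ^ (m₀+2) ≤ g.ρ ε ^ (m₀+1) := by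
        calc 2 * g.ρ ε ^ (m₀+3) + g.ρ ε ^ (m₀+2)
            = g.ρ ε ^ (m₀+1) * (2*(g.ρ ε * g.ρ ε) + g.ρ ε) := by ring
          _ ≤ g.ρ ε ^ (m₀+1) * 1 := mul_le_mul_of_nonneg_left hsc hnn
          _ = g.ρ ε ^ (m₀+1) := mul_one _
      linarith [h2'.2]
    have hrep_ar : IsRep g ar.1 z := ⟨ar.2, har⟩
    obtain ⟨hS, hconv⟩ := hser z habsS ar.1 hrep_ar
    set P : ℕ := p + 2 with hP
    set mstar : ℕ := q + P * k + 1 with hmstar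
    obtain ⟨Mh, hMh⟩ := hconv (mstar + 2)
    obtain ⟨Ns, hNs⟩ := Quotient.exists_rep Mh
    set N : ℝ → ℕ := fun ε => max (Ns.1 ε) k with hNdef
    have hN : g.NMod N :=
      Gauge.NMod.mono (Ns.2.add (g.nmod_const k))
        (fun ε => max_le (Nat.le_add_right _ _) (Nat.le_add_left _ _))
    have hle : Nt.le g Mh (Nt.mk g N hN) :=
      ⟨Ns, ⟨N, hN⟩, hNs, rfl, 1, one_pos, le_rfl, fun ε _ _ => le_max_left _ _⟩
    obtain ⟨α, β, υ, hα, hβ, hυ, m₃, hE5⟩ := hMh (Nt.mk g N hN) hle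
    have hαS : g.Negl fun ε => α.1 ε -
        ∑ n ∈ Finset.range (N ε + 1), T n ε * (ar.1 ε - z0r ε) ^ n :=
      Quotient.exact hα
    have hυneg : g.Negl fun ε => υ.1 ε - g.ρ ε ^ (mstar + 2) := Quotient.exact hυ
    have hE2 := (negl_sum_norms g T k hTj) (mstar + 3)
    refine ⟨β, hβ, mstar + 1, ?_⟩
    -- combine everything
    obtain ⟨ε₀, hε₀, hε₀1, hALL⟩ :=
      ((((((hQR.and hE2).and hwub).and hwlb).and hE5).and (hυneg (mstar+3))).and
        (hαS (mstar+3))).and (g.evs_le (by norm_num : (0:ℝ) < 1/2))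
    refine ⟨ε₀, hε₀, hε₀1, fun ε hεL hε hεε₀ => ?_⟩
    obtain ⟨⟨⟨⟨⟨⟨⟨f1, f2⟩, f3⟩, f4⟩, f5⟩, f6⟩, f7⟩, fhalf⟩ := hALL ε hε hεε₀
    have hε1 : ε ≤ 1 := hεε₀.trans hε₀1
    have hρ := g.pos ε hε hε1
    have hρ1 := g.le_one ε hε hε1
    have fL : g.ρ ε ^ q < ‖T k ε‖ := hεL.2.2
    have f1' : ∀ n : ℕ, ‖T n ε‖ ≤ g.ρ ε ^ (-((n * Q + R : ℕ) : ℤ)) := f1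
    have f2' : |∑ j ∈ Finset.range k, ‖T j ε‖| ≤ g.ρ ε ^ (mstar + 3) := f2
    have f3' : ‖ar.1 ε - z0r ε‖ ≤ g.ρ ε ^ B := f3
    have f4' : g.ρ ε ^ P ≤ ‖ar.1 ε - z0r ε‖ := f4
    have f5' : ‖α.1 ε - β.1 ε‖ + g.ρ ε ^ m₃ ≤ υ.1 ε := f5
    have f6' : |υ.1 ε - g.ρ ε ^ (mstar + 2)| ≤ g.ρ ε ^ (mstar + 3) := f6
    have f7' : ‖α.1 ε - ∑ n ∈ Finset.range (N ε + 1), T n ε * (ar.1 ε - z0r ε) ^ n‖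
        ≤ g.ρ ε ^ (mstar + 3) := f7
    have fhalf' : g.ρ ε ≤ 1/2 := fhalf
    rw [abs_le] at f6'
    have hρB : (0:ℝ) ≤ g.ρ ε ^ B := pow_nonneg hρ.le _
    have hwPk : (g.ρ ε ^ P) ^ k ≤ ‖ar.1 ε - z0r ε‖ ^ k :=
      pow_le_pow_left₀ (pow_nonneg hρ.le _) f4' k
    have hρhalf : ∀ j : ℕ, g.ρ ε ^ j ≤ (1/2:ℝ) ^ j :=
      fun j => pow_le_pow_left₀ hρ.le fhalf' j
    -- apply the main estimate
    have hmain := main_est (g.ρ ε) hρ q Q R k (N ε) (le_max_right _ _)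
      (ar.1 ε - z0r ε) (fun n => T n ε)
      (f3'.trans (pow_le_one₀ hρ.le hρ1))
      (fun n => by
        have e : g.ρ ε ^ (-((n * Q + R : ℕ) : ℤ)) = (g.ρ ε ^ (n * Q + R))⁻¹ := by
          rw [zpow_neg, zpow_natCast]
        rw [← e]
        exact f1' n)
      fL.le
      (by
        -- hsmall
        calc ∑ j ∈ Finset.range k, ‖T j ε‖
            ≤ g.ρ ε ^ (mstar + 3) := le_trans (le_abs_self _) f2'
          _ = g.ρ ε ^ 4 * (g.ρ ε ^ q * (g.ρ ε ^ P) ^ k) := by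
              rw [show mstar + 3 = 4 + (q + P * k) by rw [hmstar]; ring,
                pow_add, pow_add, pow_mul]
          _ ≤ 1/4 * (g.ρ ε ^ q * ‖ar.1 ε - z0r ε‖ ^ k) := by
              apply mul_le_mul
              · calc g.ρ ε ^ 4 ≤ (1/2:ℝ) ^ 4 := hρhalf 4
                  _ ≤ 1/4 := by norm_num
              · exact mul_le_mul_of_nonneg_left hwPk (pow_nonneg hρ.le _)
              · positivity
              · norm_num)
      (by
        -- hhalf
        have hBQ : B = Q + (q + R + k*Q + m₀ + 5) := by rw [hB]; ring
        have hQpos : (0:ℝ) < g.ρ ε ^ Q := pow_pos hρ Q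
        calc (g.ρ ε ^ Q)⁻¹ * ‖ar.1 ε - z0r ε‖ ≤ (g.ρ ε ^ Q)⁻¹ * g.ρ ε ^ B :=
              mul_le_mul_of_nonneg_left f3' (by positivity)
          _ = g.ρ ε ^ (q + R + k*Q + m₀ + 5) := by
              rw [hBQ, pow_add, ← mul_assoc, inv_mul_cancel₀ hQpos.ne', one_mul]
          _ ≤ g.ρ ε ^ 1 := pow_le_pow_of_le_one hρ.le hρ1 (by omega)
          _ ≤ 1/2 := by
              rw [pow_one]
              exact fhalf')
      (by
        -- htail
        have hBR : B = R + (k+1)*Q + (q + m₀ + 5) := by rw [hB]; ring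
        have hRpos : (0:ℝ) < g.ρ ε ^ R := pow_pos hρ R
        have hQpos : (0:ℝ) < g.ρ ε ^ ((k+1)*Q) := pow_pos hρ _
        have einv : ((g.ρ ε ^ Q)⁻¹) ^ (k+1) = (g.ρ ε ^ ((k+1)*Q))⁻¹ := by
          rw [inv_pow, ← pow_mul, Nat.mul_comm]
        calc (g.ρ ε ^ R)⁻¹ * ((g.ρ ε ^ Q)⁻¹) ^ (k+1) * 2 * ‖ar.1 ε - z0r ε‖
            ≤ (g.ρ ε ^ R)⁻¹ * ((g.ρ ε ^ Q)⁻¹) ^ (k+1) * 2 * g.ρ ε ^ B := by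
              apply mul_le_mul_of_nonneg_left f3'
              positivity
          _ = g.ρ ε ^ (q + m₀ + 5) * 2 := by
              rw [einv, hBR, pow_add, pow_add]
              field_simp
          _ = 2 * (g.ρ ε ^ q * g.ρ ε ^ (m₀ + 5)) := by rw [← pow_add]; ring
          _ ≤ 2 * (g.ρ ε ^ q * (1/2:ℝ) ^ (m₀ + 5)) := by
              apply mul_le_mul_of_nonneg_left _ (by norm_num)
              exact mul_le_mul_of_nonneg_left (hρhalf _) (pow_nonneg hρ.le _)
          _ ≤ 1/4 * g.ρ ε ^ q := by
              have h8 : ((1:ℝ)/2) ^ (m₀ + 5) ≤ ((1:ℝ)/2)^3 :=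
                pow_le_pow_of_le_one (by norm_num) (by norm_num) (by omega)
              have hq0 : (0:ℝ) ≤ g.ρ ε ^ q := pow_nonneg hρ.le _
              nlinarith)
    -- conclude: lower bound on the partial sum
    have hSlb : g.ρ ε ^ mstar ≤
        ‖∑ n ∈ Finset.range (N ε + 1), T n ε * (ar.1 ε - z0r ε) ^ n‖ := by
      refine le_trans ?_ hmain
      have e : g.ρ ε ^ mstar = g.ρ ε * (g.ρ ε ^ q * (g.ρ ε ^ P) ^ k) := by
        rw [show mstar = 1 + (q + P * k) by rw [hmstar]; ring,
          pow_add, pow_add, pow_mul, pow_one]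
      rw [e]
      have h1 : g.ρ ε ^ q * (g.ρ ε ^ P) ^ k ≤ g.ρ ε ^ q * ‖ar.1 ε - z0r ε‖ ^ k :=
        mul_le_mul_of_nonneg_left hwPk (pow_nonneg hρ.le _)
      exact mul_le_mul fhalf' h1 (by positivity) (by norm_num)
    -- triangle to β
    have t1 : ‖∑ n ∈ Finset.range (N ε + 1), T n ε * (ar.1 ε - z0r ε) ^ n‖
        ≤ ‖β.1 ε‖ + ‖α.1 ε - ∑ n ∈ Finset.range (N ε + 1), T n ε * (ar.1 ε - z0r ε) ^ n‖
          + ‖α.1 ε - β.1 ε‖ := by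
      set SS := ∑ n ∈ Finset.range (N ε + 1), T n ε * (ar.1 ε - z0r ε) ^ n
      have e : SS = β.1 ε + (-(α.1 ε - SS)) + (α.1 ε - β.1 ε) := by ring
      calc ‖SS‖ = ‖β.1 ε + (-(α.1 ε - SS)) + (α.1 ε - β.1 ε)‖ := by rw [← e]
        _ ≤ ‖β.1 ε + (-(α.1 ε - SS))‖ + ‖α.1 ε - β.1 ε‖ := norm_add_le _ _
        _ ≤ ‖β.1 ε‖ + ‖-(α.1 ε - SS)‖ + ‖α.1 ε - β.1 ε‖ := by
            have := norm_add_le (β.1 ε) (-(α.1 ε - SS))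
            linarith
        _ = ‖β.1 ε‖ + ‖α.1 ε - SS‖ + ‖α.1 ε - β.1 ε‖ := by rw [norm_neg]
    have hαβ : ‖α.1 ε - β.1 ε‖ ≤ g.ρ ε ^ (mstar+2) + g.ρ ε ^ (mstar+3) := by
      have hm₃nn : (0:ℝ) ≤ g.ρ ε ^ m₃ := pow_nonneg hρ.le _
      linarith [f5', f6'.2]
    have hmnn : (0:ℝ) ≤ g.ρ ε ^ mstar := pow_nonneg hρ.le _
    have hsc : g.ρ ε + g.ρ ε * g.ρ ε + 2*(g.ρ ε * g.ρ ε * g.ρ ε) ≤ 1 := by nlinarith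
    have key : g.ρ ε ^ (mstar+1) + g.ρ ε ^ (mstar+2) + 2 * g.ρ ε ^ (mstar+3)
        ≤ g.ρ ε ^ mstar := by
      calc g.ρ ε ^ (mstar+1) + g.ρ ε ^ (mstar+2) + 2 * g.ρ ε ^ (mstar+3)
          = g.ρ ε ^ mstar * (g.ρ ε + g.ρ ε * g.ρ ε + 2*(g.ρ ε * g.ρ ε * g.ρ ε)) := by ring
        _ ≤ g.ρ ε ^ mstar * 1 := mul_le_mul_of_nonneg_left hsc hmnn
        _ = g.ρ ε ^ mstar := mul_one _
    linarith [f7', hSlb, t1, hαβ]
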